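/- (Corollary 1, compliance branch.) There exists a unique k₁ ∈ ℝ satisfying the fixed-point equation k₁ = t + (1 − F(k₁))/f(k₁). Moreover, for any classifier δ with ρ(δ,φ) ≠ 0 and any voter cost γ, the map r ↦ EU₁(r | γ) attains its unique global maximum over ℝ at r₁* = k₁ / ρ(δ,φ). -/

import Mathlib

open MeasureTheory

/-- A cost distribution: a CDF `F` with continuously differentiable structure
given by a strictly positive, differentiable, log-concave density `f` with full
support on `ℝ`. -/
structure CostDist where
  F : ℝ → ℝ
  f : ℝ → ℝ
  deriv_eq : ∀ x : ℝ, HasDerivAt F (f x) x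
  f_pos : ∀ x : ℝ, 0 < f x
  f_diff : Differentiable ℝ f
  f_logConcave : ConcaveOn ℝ Set.univ fun x => Real.log (f x)
  tendsto_bot : Filter.Tendsto F Filter.atBot (nhds 0)
  tendsto_top : Filter.Tendsto F Filter.atTop (nhds 1)

/-- Expected responsiveness of the classifier `δ = (δ₁, δ₀)` at precision `φ`. -/
noncomputable def rho (d1 d0 phi : ℝ) : ℝ := (d1 + d0 - 1) * (2 * phi - 1)

/-- The designer's expected payoff `EU_D(δ | r)`. -/
noncomputable def EUD (D : CostDist) (phi A1 A0 B1 B0 r d1 d0 : ℝ) : ℝ :=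
  D.F (r * rho d1 d0 phi) *
      (phi * (A1 * d1 + A0 * (1 - d1)) + (1 - phi) * (A0 * d0 + A1 * (1 - d0))) +
    (1 - D.F (r * rho d1 d0 phi)) *
      (phi * (B1 * d0 + B0 * (1 - d0)) + (1 - phi) * (B0 * d1 + B1 * (1 - d1)))

/-- A voter's expected payoff conditional on complying, `EU₁(r | γ)`. -/
noncomputable def EU1 (D : CostDist) (phi t gamma d1 d0 r : ℝ) : ℝ :=
  -gamma + r * rho d1 d0 phi * (1 - D.F (r * rho d1 d0 phi)) + t * D.F (r * rho d1 d0 phi)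

/-- A voter's expected payoff conditional on not complying, `EU₀(r)`. -/
noncomputable def EU0 (D : CostDist) (phi t d1 d0 r : ℝ) : ℝ :=
  -(r * rho d1 d0 phi) * D.F (r * rho d1 d0 phi) + t * D.F (r * rho d1 d0 phi)

/-- A voter's overall payoff `V(r | γ) = max(EU₁(r | γ), EU₀(r))`. -/
noncomputable def V (D : CostDist) (phi t gamma d1 d0 r : ℝ) : ℝ :=
  max (EU1 D phi t gamma d1 d0 r) (EU0 D phi t d1 d0 r)

/-- Strict quasiconcavity of a real function on a set. -/
def StrictQuasiconcaveOn (s : Set ℝ) (g : ℝ → ℝ) : Prop :=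
  ∀ ⦃x⦄, x ∈ s → ∀ ⦃y⦄, y ∈ s → x ≠ y → ∀ ⦃a b : ℝ⦄, 0 < a → 0 < b → a + b = 1 →
    min (g x) (g y) < g (a * x + b * y)

/-- Strict quasiconvexity of a real function on a set. -/
def StrictQuasiconvexOn (s : Set ℝ) (g : ℝ → ℝ) : Prop :=
  ∀ ⦃x⦄, x ∈ s → ∀ ⦃y⦄, y ∈ s → x ≠ y → ∀ ⦃a b : ℝ⦄, 0 < a → 0 < b → a + b = 1 →
    g (a * x + b * y) < max (g x) (g y)

/-- `(r, δ)` is an equilibrium: `r` maximizes the median voter's payoff given `δ`,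
and `δ ∈ [0,1]²` maximizes the designer's payoff given `r`. -/
def IsEquilibrium (D : CostDist) (phi t A1 A0 B1 B0 gammaMu r d1 d0 : ℝ) : Prop :=
  d1 ∈ Set.Icc (0 : ℝ) 1 ∧ d0 ∈ Set.Icc (0 : ℝ) 1 ∧
  (∀ r' : ℝ, V D phi t gammaMu d1 d0 r' ≤ V D phi t gammaMu d1 d0 r) ∧
  (∀ e1 ∈ Set.Icc (0 : ℝ) 1, ∀ e0 ∈ Set.Icc (0 : ℝ) 1,
    EUD D phi A1 A0 B1 B0 r e1 e0 ≤ EUD D phi A1 A0 B1 B0 r d1 d0)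

namespace Cor1
variable (D : CostDist)

lemma F_cont : Continuous D.F :=
  continuous_iff_continuousAt.2 fun x => (D.deriv_eq x).continuousAt

lemma S_eq (x : ℝ) : ∫ u in Set.Ioi x, D.f u = 1 - D.F x :=
  integral_Ioi_of_hasDerivAt_of_nonneg' (fun u _ => D.deriv_eq u)
    (fun u _ => (D.f_pos u).le) D.tendsto_top

lemma S_int (y : ℝ) : IntegrableOn D.f (Set.Ioi y) :=
  integrableOn_Ioi_deriv_of_nonneg' (fun u _ => D.deriv_eq u)
    (fun u _ => (D.f_pos u).le) D.tendsto_top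

lemma shift_deriv (d : ℝ) : ∀ u : ℝ, HasDerivAt (fun u => D.F (u - d)) (D.f (u - d)) u := by
  intro u
  have h2 : HasDerivAt (fun u : ℝ => u - d) 1 u := (hasDerivAt_id u).sub_const d
  simpa using (D.deriv_eq (u - d)).comp_sub_const u d

lemma shift_tendsto (d : ℝ) :
    Filter.Tendsto (fun u => D.F (u - d)) Filter.atTop (nhds 1) := by
  apply D.tendsto_top.comp
  simpa [sub_eq_add_neg] using
    Filter.tendsto_atTop_add_const_right Filter.atTop (-d) Filter.tendsto_id

lemma S_shift (y d : ℝ) : ∫ u in Set.Ioi y, D.f (u - d) = 1 - D.F (y - d) :=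
  integral_Ioi_of_hasDerivAt_of_nonneg' (fun u _ => shift_deriv D d u)
    (fun u _ => (D.f_pos _).le) (shift_tendsto D d)

lemma S_shift_int (y d : ℝ) : IntegrableOn (fun u => D.f (u - d)) (Set.Ioi y) :=
  integrableOn_Ioi_deriv_of_nonneg' (fun u _ => shift_deriv D d u)
    (fun u _ => (D.f_pos _).le) (shift_tendsto D d)

lemma S_nonneg (x : ℝ) : 0 ≤ 1 - D.F x := by
  rw [← S_eq D x]
  exact setIntegral_nonneg measurableSet_Ioi fun u _ => (D.f_pos u).le

lemma ptwise (x y s : ℝ) (hxy : x ≤ y) (hys : y ≤ s) :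
    D.f x * D.f s ≤ D.f y * D.f (s - (y - x)) := by
  rcases eq_or_lt_of_le hxy with rfl | hxy
  · simp
  have hsx : (0:ℝ) < s - x := by linarith
  set θ := (s - y) / (s - x) with hθ
  have hθ0 : 0 ≤ θ := div_nonneg (by linarith) hsx.le
  have hθ1 : θ ≤ 1 := (div_le_one hsx).2 (by linarith)
  have hne : s - x ≠ 0 := ne_of_gt hsx
  have h1 : θ * x + (1 - θ) * s = y := by rw [hθ]; field_simp; ring
  have h2 : (1 - θ) * x + θ * s = s - (y - x) := by rw [hθ]; field_simp; ring
  have A := D.f_logConcave.2 (Set.mem_univ x) (Set.mem_univ s)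
    hθ0 (show (0:ℝ) ≤ 1 - θ by linarith) (by ring)
  have B := D.f_logConcave.2 (Set.mem_univ x) (Set.mem_univ s)
    (show (0:ℝ) ≤ 1 - θ by linarith) hθ0 (by ring)
  simp only [smul_eq_mul] at A B
  rw [h1] at A
  rw [h2] at B
  have key : Real.log (D.f x) + Real.log (D.f s) ≤
      Real.log (D.f y) + Real.log (D.f (s - (y - x))) := by linarith
  have := Real.exp_le_exp.2 key
  rwa [Real.exp_add, Real.exp_add, Real.exp_log (D.f_pos _), Real.exp_log (D.f_pos _),
    Real.exp_log (D.f_pos _), Real.exp_log (D.f_pos _)] at this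

lemma hazard (x y : ℝ) (hxy : x ≤ y) :
    D.f x * (1 - D.F y) ≤ D.f y * (1 - D.F x) := by
  have h1 : D.f x * (1 - D.F y) = ∫ u in Set.Ioi y, D.f x * D.f u := by
    rw [integral_const_mul, S_eq]
  have h2 : D.f y * (1 - D.F x) = ∫ u in Set.Ioi y, D.f y * D.f (u - (y - x)) := by
    rw [integral_const_mul, S_shift]
    norm_num
  rw [h1, h2]
  refine setIntegral_mono_on ((S_int D y).const_mul _) ((S_shift_int D y (y - x)).const_mul _)
    measurableSet_Ioi fun s hs => ?_
  exact ptwise D x y s hxy (le_of_lt hs)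

noncomputable def Haz (t x : ℝ) : ℝ := t + (1 - D.F x) / D.f x - x

lemma ratio_anti {x y : ℝ} (hxy : x ≤ y) :
    (1 - D.F y) / D.f y ≤ (1 - D.F x) / D.f x := by
  rw [div_le_div_iff₀ (D.f_pos y) (D.f_pos x)]
  have := hazard D x y hxy
  nlinarith

lemma Haz_strictAnti (t : ℝ) : StrictAnti (Haz D t) := by
  intro x y hxy
  have := ratio_anti D hxy.le
  unfold Haz
  linarith

lemma Haz_cont (t : ℝ) : Continuous (Haz D t) := by
  unfold Haz
  exact ((continuous_const.add ((continuous_const.sub (F_cont D)).div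
    D.f_diff.continuous fun x => (D.f_pos x).ne')).sub continuous_id)

lemma exists_root (t : ℝ) (ht : 0 ≤ t) : ∃ k, Haz D t k = 0 := by
  set C := (1 - D.F 0) / D.f 0 with hC
  have hC0 : 0 ≤ C := div_nonneg (S_nonneg D 0) (D.f_pos 0).le
  have ha : 0 < Haz D t (t - 1) := by
    have := div_nonneg (S_nonneg D (t - 1)) (D.f_pos (t - 1)).le
    unfold Haz; linarith
  have hb : Haz D t (t + C + 1) < 0 := by
    have hx : (0:ℝ) ≤ t + C + 1 := by linarith
    have := ratio_anti D hx
    unfold Haz; linarith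
  have hle : t - 1 ≤ t + C + 1 := by linarith
  have h0 : (0:ℝ) ∈ Set.Icc (Haz D t (t + C + 1)) (Haz D t (t - 1)) := ⟨hb.le, ha.le⟩
  obtain ⟨k, _, hk⟩ := intermediate_value_Icc' hle (Haz_cont D t).continuousOn h0
  exact ⟨k, hk⟩

noncomputable def g (t x : ℝ) : ℝ := x * (1 - D.F x) + t * D.F x

lemma g_deriv (t x : ℝ) : HasDerivAt (g D t) (D.f x * Haz D t x) x := by
  have h1 : HasDerivAt (fun x => x * (1 - D.F x) + t * D.F x)
      (1 * (1 - D.F x) + x * (0 - D.f x) + t * D.f x) x :=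
    ((hasDerivAt_id x).mul ((hasDerivAt_const x 1).sub (D.deriv_eq x))).add
      ((D.deriv_eq x).const_mul t)
  convert h1 using 1
  · rfl
  unfold Haz
  field_simp [(D.f_pos x).ne']
  ring

lemma g_max (t k : ℝ) (hk : Haz D t k = 0) (x : ℝ) (hx : x ≠ k) : g D t x < g D t k := by
  have hanti := Haz_strictAnti D t
  have hcont : Continuous (g D t) := by
    have : Differentiable ℝ (g D t) := fun y => (g_deriv D t y).differentiableAt
    exact this.continuous
  have hderiv : ∀ y : ℝ, deriv (g D t) y = D.f y * Haz D t y := fun y => (g_deriv D t y).deriv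
  rcases lt_or_gt_of_ne hx with h | h
  · have hm : StrictMonoOn (g D t) (Set.Iic k) := by
      apply strictMonoOn_of_deriv_pos (convex_Iic k) hcont.continuousOn
      intro y hy
      rw [interior_Iic] at hy
      rw [hderiv]
      exact mul_pos (D.f_pos y) (by have := hanti hy; linarith)
    exact hm (Set.mem_Iic.2 h.le) (Set.mem_Iic.2 le_rfl) h
  · have hm : StrictAntiOn (g D t) (Set.Ici k) := by
      apply strictAntiOn_of_deriv_neg (convex_Ici k) hcont.continuousOn
      intro y hy
      rw [interior_Ici] at hy
      rw [hderiv]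
      exact mul_neg_of_pos_of_neg (D.f_pos y) (by have := hanti hy; linarith)
    exact hm (Set.mem_Ici.2 le_rfl) (Set.mem_Ici.2 h.le) h

end Cor1

/-- **Corollary 1 (compliance branch).** There is a unique `k₁` with
`k₁ = t + (1 − F(k₁))/f(k₁)`, and for any non-null classifier and any cost `γ`,
`EU₁(· | γ)` attains its unique global maximum at `r₁* = k₁ / ρ(δ,φ)`. -/
theorem cor1_compliance (D : CostDist) (phi t : ℝ)
    (hphi : phi ∈ Set.Ioc (1 / 2 : ℝ) 1) (ht : 0 ≤ t) :
    (∃! k : ℝ, k = t + (1 - D.F k) / D.f k) ∧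
    (∀ k1 : ℝ, k1 = t + (1 - D.F k1) / D.f k1 →
      ∀ d1 ∈ Set.Icc (0 : ℝ) 1, ∀ d0 ∈ Set.Icc (0 : ℝ) 1, rho d1 d0 phi ≠ 0 →
        ∀ gamma r : ℝ, r ≠ k1 / rho d1 d0 phi →
          EU1 D phi t gamma d1 d0 r < EU1 D phi t gamma d1 d0 (k1 / rho d1 d0 phi)) := by
  obtain ⟨k0, hk0⟩ := Cor1.exists_root D t ht
  constructor
  · refine ⟨k0, by unfold Cor1.Haz at hk0; linarith, fun y hy => ?_⟩
    have hy' : Cor1.Haz D t y = 0 := by unfold Cor1.Haz; linarith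
    exact (Cor1.Haz_strictAnti D t).injective (hy'.trans hk0.symm)
  · intro k1 hk1 d1 _ d0 _ hρ gamma r hr
    have hk1' : Cor1.Haz D t k1 = 0 := by unfold Cor1.Haz; linarith
    set ρ := rho d1 d0 phi with hρdef
    have hrρ : r * ρ ≠ k1 := fun h => hr ((eq_div_iff hρ).2 h)
    have hkρ : (k1 / ρ) * ρ = k1 := div_mul_cancel₀ _ hρ
    have hlt := Cor1.g_max D t k1 hk1' (r * ρ) hrρ
    unfold Cor1.g at hlt
    unfold EU1
    rw [← hρdef, hkρ]
    linarith
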